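/- Let (b,ψ) be any configuration on ℝ², let ε > 0, let n ≥ 3, and let (c,f) be a smooth compactly supported pair on ℝⁿ = ℝ^{n−2} × ℝ², with c = (c₁,…,c_n) : ℝⁿ → ℝⁿ and f : ℝⁿ → ℂ. Writing 𝕃_ε(c,f) = (g, h) with g : ℝⁿ → ℝⁿ and h : ℝⁿ → ℂ, the following integration-by-parts identity holds: ∫_{ℝⁿ} [ε²·Σ_{k=1}^n c_k g_k + Re(conj(f)·h)] = ∫_{ℝⁿ} [ε²·Σ_{1 ≤ j < k ≤ n}(∂_jc_k − ∂_kc_j)² + ε²·(Σ_{k=1}^n ∂_kc_k)² + Σ_{k=1}^n |D_kf|²] − 4·Σ_{k=1}^n ∫_{ℝⁿ} c_k·Im(conj(D_kψ)·f) + ∫_{ℝⁿ} [|ψ|²·Σ_{k=1}^n c_k² + ε⁻²|ψ|²|f|² − (1/(2ε²))(1 − |ψ|²)|f|²]. -/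

import Mathlib

noncomputable section

open Complex MeasureTheory Filter ENNReal

/-- The plane `ℝ²`. -/
abbrev Plane := EuclideanSpace ℝ (Fin 2)

/-- Partial derivative on the plane in the `j`-th coordinate direction. -/
def pdP (j : Fin 2) {V : Type*} [NormedAddCommGroup V] [NormedSpace ℝ V]
    (g : Plane → V) (y : Plane) : V :=
  fderiv ℝ g y (EuclideanSpace.single j 1)

/-- First covariant derivative `D₁u = ∂₁u + i b₁ u` on the plane. -/
def D1 (b1 : Plane → ℝ) (ψ : Plane → ℂ) (y : Plane) : ℂ := pdP 0 ψ y + I * b1 y * ψ y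

/-- Second covariant derivative `D₂u = ∂₂u + i b₂ u` on the plane. -/
def D2 (b2 : Plane → ℝ) (ψ : Plane → ℂ) (y : Plane) : ℂ := pdP 1 ψ y + I * b2 y * ψ y

/-- Curvature `F₁₂ = ∂₁b₂ − ∂₂b₁` on the plane. -/
def F12 (b1 b2 : Plane → ℝ) (y : Plane) : ℝ := pdP 0 b2 y - pdP 1 b1 y

/-- A one-vortex solution for parameter `ε`, with decay constants `C₀` and `μ₀`. -/
def IsOneVortex (ε C₀ μ₀ : ℝ) (b1 b2 : Plane → ℝ) (ψ : Plane → ℂ) : Prop :=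
  ContDiff ℝ (⊤ : ℕ∞) b1 ∧ ContDiff ℝ (⊤ : ℕ∞) b2 ∧ ContDiff ℝ (⊤ : ℕ∞) ψ ∧
  (∀ y, ε * F12 b1 b2 y = (1 - ‖ψ y‖ ^ 2) / (2 * ε)) ∧
  (∀ y, D1 b1 ψ y - I * D2 b2 ψ y = 0) ∧
  (∫ y : Plane, F12 b1 b2 y) = 2 * Real.pi ∧
  0 < C₀ ∧ μ₀ ∈ Set.Ioc (0 : ℝ) 1 ∧
  ∀ y : Plane,
    0 ≤ 1 - ‖ψ y‖ ^ 2 ∧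
    1 - ‖ψ y‖ ^ 2 ≤ C₀ * Real.exp (-(μ₀ * ‖y‖) / ε) ∧
    ‖D1 b1 ψ y‖ ≤ C₀ * ε⁻¹ * Real.exp (-(μ₀ * ‖y‖) / ε) ∧
    ‖D2 b2 ψ y‖ ≤ C₀ * ε⁻¹ * Real.exp (-(μ₀ * ‖y‖) / ε) ∧
    |F12 b1 b2 y| ≤ C₀ * ε⁻¹ ^ 2 * Real.exp (-(μ₀ * ‖y‖) / ε)

/-- The total space `ℝⁿ = ℝ^{n-2} × ℝ²` with `m = n - 2`. -/
abbrev Tot (m : ℕ) := EuclideanSpace ℝ (Fin m) × Plane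

/-- The `k`-th coordinate direction in `ℝⁿ = ℝ^{n-2} × ℝ²`. -/
def dir (m : ℕ) (k : Fin (m + 2)) : Tot m :=
  if h : (k : ℕ) < m then (EuclideanSpace.single ⟨(k : ℕ), h⟩ 1, 0)
  else (0, EuclideanSpace.single ⟨(k : ℕ) - m, by have := k.isLt; omega⟩ 1)

/-- Directional derivative on the total space. -/
def pdT {m : ℕ} (v : Tot m) {V : Type*} [NormedAddCommGroup V] [NormedSpace ℝ V]
    (f : Tot m → V) (p : Tot m) : V :=
  fderiv ℝ f p v

/-- The Euclidean Laplacian on the total space. -/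
def lapT {m : ℕ} (f : Tot m → ℝ) (p : Tot m) : ℝ :=
  ∑ k : Fin (m + 2), pdT (dir m k) (fun q => pdT (dir m k) f q) p

/-- The connection coefficients on the total space: `0` in the `ℝ^{n-2}` directions,
`b₁`, `b₂` in the two `ℝ²` directions. -/
def Bf {m : ℕ} (b1 b2 : Plane → ℝ) (k : Fin (m + 2)) (p : Tot m) : ℝ :=
  if (k : ℕ) = m then b1 p.2 else if (k : ℕ) = m + 1 then b2 p.2 else 0

/-- Covariant derivative `D_k f = ∂_k f + i B_k f` on the total space. -/
def DT {m : ℕ} (b1 b2 : Plane → ℝ) (k : Fin (m + 2)) (f : Tot m → ℂ) (p : Tot m) : ℂ :=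
  pdT (dir m k) f p + I * (Bf b1 b2 k p : ℂ) * f p

/-- The covariant derivative of the lifted vortex section: `0` in the `ℝ^{n-2}` directions,
`D₁ψ`, `D₂ψ` in the two `ℝ²` directions. -/
def DPsi {m : ℕ} (b1 b2 : Plane → ℝ) (ψ : Plane → ℂ) (k : Fin (m + 2)) (p : Tot m) : ℂ :=
  if (k : ℕ) = m then D1 b1 ψ p.2 else if (k : ℕ) = m + 1 then D2 b2 ψ p.2 else 0

/-- The linearized operator `𝕃_ε` on pairs `(c, f)`. -/
def Lop {m : ℕ} (ε : ℝ) (b1 b2 : Plane → ℝ) (ψ : Plane → ℂ)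
    (c : Tot m → EuclideanSpace ℝ (Fin (m + 2))) (f : Tot m → ℂ) :
    (Tot m → EuclideanSpace ℝ (Fin (m + 2))) × (Tot m → ℂ) :=
  (fun p => (WithLp.toLp 2 (fun k => -lapT (fun q => c q k) p + ε⁻¹ ^ 2 * ‖ψ p.2‖ ^ 2 * c p k
      - 2 * ε⁻¹ ^ 2 * ((starRingEnd ℂ) (DPsi b1 b2 ψ k p) * f p).im) :
        EuclideanSpace ℝ (Fin (m + 2))),
   fun p => -(∑ k : Fin (m + 2), DT b1 b2 k (fun q => DT b1 b2 k f q) p)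
      + ((ε⁻¹ ^ 2 * ‖ψ p.2‖ ^ 2 : ℝ) : ℂ) * f p
      - ((1 / (2 * ε ^ 2) * (1 - ‖ψ p.2‖ ^ 2) : ℝ) : ℂ) * f p
      - 2 * I * ∑ k : Fin (m + 2), ((c p k : ℝ) : ℂ) * DPsi b1 b2 ψ k p)

/-- The weighted sup norm `‖u‖_{C⁰_{μ,ε}}` on the total space. -/
def C0n {m : ℕ} (μ ε : ℝ) {V : Type*} [NormedAddCommGroup V] (u : Tot m → V) : ℝ≥0∞ :=
  ⨆ p : Tot m, ENNReal.ofReal (Real.exp (μ * ‖p.2‖ / ε) * ‖u p‖)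

/-- The weighted Hölder seminorm on the total space. -/
def Holn {m : ℕ} (μ ε γ : ℝ) {V : Type*} [NormedAddCommGroup V] (u : Tot m → V) : ℝ≥0∞ :=
  ⨆ q : {pq : Tot m × Tot m // pq.1 ≠ pq.2 ∧
      ‖pq.1.1 - pq.2.1‖ + ‖pq.1.2 - pq.2.2‖ ≤ ε},
    ENNReal.ofReal (ε ^ γ * Real.exp (μ * (‖q.1.1.2‖ + ‖q.1.2.2‖) / (2 * ε)) *
      (‖u q.1.1 - u q.1.2‖ / (‖q.1.1.1 - q.1.2.1‖ + ‖q.1.1.2 - q.1.2.2‖) ^ γ))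

/-- The weighted Hölder norm `‖u‖_{C^γ_{μ,ε}}` on the total space. -/
def Cgn {m : ℕ} (μ ε γ : ℝ) {V : Type*} [NormedAddCommGroup V] (u : Tot m → V) : ℝ≥0∞ :=
  C0n μ ε u + Holn μ ε γ u

/-- The weighted Hölder norm `‖u‖_{C^{k,γ}_{μ,ε}}` on the total space. -/
def Ckgn {m : ℕ} (k : ℕ) (μ ε γ : ℝ) {V : Type*} [NormedAddCommGroup V] [NormedSpace ℝ V]
    (u : Tot m → V) : ℝ≥0∞ :=
  ∑ l ∈ Finset.range (k + 1), ENNReal.ofReal (ε ^ l) * Cgn μ ε γ (iteratedFDeriv ℝ l u)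

/-- The weighted Hölder norm `‖(c,f)‖_{C^{k,γ}_{μ,ε}} = ε‖c‖ + ‖f‖` for pairs. -/
def PairN {m : ℕ} (k : ℕ) (μ ε γ : ℝ)
    (c : Tot m → EuclideanSpace ℝ (Fin (m + 2))) (f : Tot m → ℂ) : ℝ≥0∞ :=
  ENNReal.ofReal ε * Ckgn k μ ε γ c + Ckgn k μ ε γ f

/-- The fiberwise orthogonality conditions. -/
def FiberOrtho {m : ℕ} (ε : ℝ) (b1 b2 : Plane → ℝ) (ψ : Plane → ℂ)
    (c : Tot m → EuclideanSpace ℝ (Fin (m + 2))) (f : Tot m → ℂ) : Prop :=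
  ∀ (x : EuclideanSpace ℝ (Fin m)) (w1 w2 : ℝ),
    (∫ y : Plane,
      (ε ^ 2 * F12 b1 b2 y *
          (-(w2 * c (x, y) ⟨m, by omega⟩) + w1 * c (x, y) ⟨m + 1, by omega⟩)
        + ((starRingEnd ℂ) (f (x, y)) *
            ((w1 : ℂ) * D1 b1 ψ y + (w2 : ℂ) * D2 b2 ψ y)).re)) = 0

/-- Membership in the space `E^{k,γ}_{μ,ε}`: smooth, finite weighted norm, and fiberwise
orthogonality. -/
def memE {m : ℕ} (k : ℕ) (μ ε γ : ℝ) (b1 b2 : Plane → ℝ) (ψ : Plane → ℂ)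
    (c : Tot m → EuclideanSpace ℝ (Fin (m + 2))) (f : Tot m → ℂ) : Prop :=
  ContDiff ℝ (⊤ : ℕ∞) c ∧ ContDiff ℝ (⊤ : ℕ∞) f ∧
    PairN k μ ε γ c f < ⊤ ∧ FiberOrtho ε b1 b2 ψ c f


/-! ### Auxiliary lemmas for the quadratic form identity -/

instance totVolumeHaar (m : ℕ) : (volume : Measure (Tot m)).IsAddHaarMeasure :=
  Measure.prod.instIsAddHaarMeasure _ _

lemma contDiff_fderiv_apply {E V : Type*} [NormedAddCommGroup E] [NormedSpace ℝ E]
    [NormedAddCommGroup V] [NormedSpace ℝ V] {u : E → V} (hu : ContDiff ℝ (⊤:ℕ∞) u) (v : E) :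
    ContDiff ℝ (⊤:ℕ∞) (fun x => fderiv ℝ u x v) :=
  (hu.fderiv_right (mod_cast le_top)).clm_apply contDiff_const

lemma contDiff_pdT {m : ℕ} {V : Type*} [NormedAddCommGroup V] [NormedSpace ℝ V]
    {u : Tot m → V} (hu : ContDiff ℝ (⊤:ℕ∞) u) (v : Tot m) :
    ContDiff ℝ (⊤:ℕ∞) (pdT v u) :=
  contDiff_fderiv_apply hu v

lemma hcs_pdT {m : ℕ} {V : Type*} [NormedAddCommGroup V] [NormedSpace ℝ V]
    {u : Tot m → V} (hus : HasCompactSupport u) (v : Tot m) :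
    HasCompactSupport (pdT v u) :=
  (hus.fderiv ℝ).comp_left (g := fun L : Tot m →L[ℝ] V => L v) rfl

lemma integral_pdT_eq_zero {m : ℕ} {u : Tot m → ℝ} (hu : ContDiff ℝ (⊤:ℕ∞) u)
    (hus : HasCompactSupport u) (v : Tot m) : ∫ p : Tot m, pdT v u p = 0 := by
  have h1 : Integrable (fun p => fderiv ℝ u p v) volume := by
    apply Continuous.integrable_of_hasCompactSupport
    · exact (contDiff_fderiv_apply hu v).continuous
    · exact hcs_pdT hus v
  have := integral_mul_fderiv_eq_neg_fderiv_mul_of_integrable (μ := (volume : Measure (Tot m)))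
    (f := fun _ => (1:ℝ)) (g := u) (v := v)
    (by simpa using h1) (by simpa using h1)
    (by simpa using hu.continuous.integrable_of_hasCompactSupport hus)
    (fun x _ => differentiableAt_const _) (fun x _ => (hu.differentiable (by simp)) x)
  simpa [pdT] using this

lemma pdT_eq_zero_of_nmem {m : ℕ} {V : Type*} [NormedAddCommGroup V] [NormedSpace ℝ V]
    {u : Tot m → V} {p : Tot m} (hp : p ∉ tsupport u) (v : Tot m) : pdT v u p = 0 := by
  have h : fderiv ℝ u p = 0 := by
    have hsub := support_fderiv_subset (𝕜 := ℝ) (f := u)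
    have : p ∉ Function.support (fderiv ℝ u) := fun hm => hp (hsub hm)
    exact Function.notMem_support.mp this
  simp [pdT, h]

lemma pdT_mul {m : ℕ} {u w : Tot m → ℝ} (hu : Differentiable ℝ u) (hw : Differentiable ℝ w)
    (v : Tot m) (p : Tot m) :
    pdT v (fun q => u q * w q) p = pdT v u p * w p + u p * pdT v w p := by
  have h := fderiv_fun_mul (𝕜 := ℝ) (hu p) (hw p)
  simp only [pdT, h, ContinuousLinearMap.add_apply, ContinuousLinearMap.smul_apply, smul_eq_mul]
  ring

lemma pdT_add {m : ℕ} {V : Type*} [NormedAddCommGroup V] [NormedSpace ℝ V]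
    {u w : Tot m → V} (hu : Differentiable ℝ u) (hw : Differentiable ℝ w)
    (v : Tot m) (p : Tot m) :
    pdT v (fun q => u q + w q) p = pdT v u p + pdT v w p := by
  simp only [pdT, fderiv_fun_add (hu p) (hw p), ContinuousLinearMap.add_apply]

lemma pdT_clm {m : ℕ} {V W : Type*} [NormedAddCommGroup V] [NormedSpace ℝ V]
    [NormedAddCommGroup W] [NormedSpace ℝ W] (L : V →L[ℝ] W) {u : Tot m → V}
    (hu : Differentiable ℝ u) (v : Tot m) (p : Tot m) :
    pdT v (fun q => L (u q)) p = L (pdT v u p) := by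
  have h := (L.hasFDerivAt.comp p (hu p).hasFDerivAt).fderiv
  simp only [pdT]
  rw [show (fun q => L (u q)) = L ∘ u from rfl, h]
  rfl

lemma pdT_pdT_comm {m : ℕ} {u : Tot m → ℝ} (hu : ContDiff ℝ (⊤:ℕ∞) u) (v w : Tot m)
    (p : Tot m) : pdT v (pdT w u) p = pdT w (pdT v u) p := by
  have h1 : DifferentiableAt ℝ (fderiv ℝ u) p :=
    ((hu.fderiv_right (m := (⊤:ℕ∞)) (mod_cast le_top)).differentiable
      (by simp)).differentiableAt
  have key : ∀ a b : Tot m, pdT a (pdT b u) p = fderiv ℝ (fderiv ℝ u) p a b := by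
    intro a b
    have hb : pdT b u = fun q => (fderiv ℝ u q) b := rfl
    simp only [pdT, hb]
    rw [fderiv_clm_apply h1 (differentiableAt_const b)]
    simp
  rw [key, key]
  exact (hu.contDiffAt.isSymmSndFDerivAt (by rw [minSmoothness_of_isRCLikeNormedField, ← WithTop.coe_ofNat]; exact WithTop.coe_le_coe.2 le_top)) v w

lemma pdT_re_conj_mul {m : ℕ} {f g : Tot m → ℂ} (hf : Differentiable ℝ f)
    (hg : Differentiable ℝ g) (v : Tot m) (p : Tot m) :
    pdT v (fun q => ((starRingEnd ℂ) (f q) * g q).re) p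
      = ((starRingEnd ℂ) (pdT v f p) * g p).re + ((starRingEnd ℂ) (f p) * pdT v g p).re := by
  have e : (fun q => ((starRingEnd ℂ) (f q) * g q).re)
      = fun q => (fun r => Complex.reCLM (f r) * Complex.reCLM (g r)) q
          + (fun r => Complex.imCLM (f r) * Complex.imCLM (g r)) q := by
    funext q
    simp [Complex.mul_re]
  have hfr : Differentiable ℝ (fun q => Complex.reCLM (f q)) :=
    Complex.reCLM.differentiable.comp hf
  have hfi : Differentiable ℝ (fun q => Complex.imCLM (f q)) :=
    Complex.imCLM.differentiable.comp hf
  have hgr : Differentiable ℝ (fun q => Complex.reCLM (g q)) :=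
    Complex.reCLM.differentiable.comp hg
  have hgi : Differentiable ℝ (fun q => Complex.imCLM (g q)) :=
    Complex.imCLM.differentiable.comp hg
  rw [e, pdT_add (u := fun r => Complex.reCLM (f r) * Complex.reCLM (g r))
    (w := fun r => Complex.imCLM (f r) * Complex.imCLM (g r)) (hfr.mul hgr) (hfi.mul hgi), pdT_mul hfr hgr, pdT_mul hfi hgi,
    pdT_clm Complex.reCLM hf, pdT_clm Complex.imCLM hf, pdT_clm Complex.reCLM hg,
    pdT_clm Complex.imCLM hg]
  simp [Complex.mul_re]
  ring

lemma re_conj_mul_self (z : ℂ) : ((starRingEnd ℂ) z * z).re = ‖z‖^2 := by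
  rw [mul_comm, Complex.mul_conj, Complex.ofReal_re, ← Complex.sq_norm]

lemma norm_sq_re_im (z : ℂ) : ‖z‖^2 = z.re^2 + z.im^2 := by
  rw [← re_conj_mul_self]; simp [Complex.mul_re]; ring

lemma qf_key1 (F dF G : ℂ) (B : ℝ) (hG : G = dF + Complex.I*(B:ℂ)*F) :
    ((starRingEnd ℂ) F * (Complex.I*(B:ℂ)*G)).re + ‖G‖^2 = ((starRingEnd ℂ) dF * G).re := by
  subst hG
  simp only [norm_sq_re_im, Complex.mul_re, Complex.mul_im, Complex.add_re, Complex.add_im,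
    Complex.conj_re, Complex.conj_im, Complex.I_re, Complex.I_im, Complex.ofReal_re,
    Complex.ofReal_im]
  ring

lemma qf_key2 (F P : ℂ) (s : ℝ) :
    ((starRingEnd ℂ) F * (2*Complex.I*((s:ℂ) * P))).re
      = 2*(s * (((starRingEnd ℂ) P * F).im)) := by
  simp only [Complex.mul_re, Complex.mul_im, Complex.conj_re, Complex.conj_im, Complex.I_re,
    Complex.I_im, Complex.ofReal_re, Complex.ofReal_im, Complex.re_ofNat, Complex.im_ofNat]
  ring

lemma qf_key3 (F : ℂ) (r : ℝ) : ((starRingEnd ℂ) F * ((r:ℂ) * F)).re = r * ‖F‖^2 := by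
  simp only [norm_sq_re_im, Complex.mul_re, Complex.mul_im, Complex.conj_re, Complex.conj_im,
    Complex.ofReal_re, Complex.ofReal_im]
  ring

lemma sum_ite_antisym {N : ℕ} (a : Fin N → Fin N → ℝ) :
    ∑ j : Fin N, ∑ k : Fin N, (if (j:ℕ) < (k:ℕ) then (a j k - a k j)^2 else 0)
      = (∑ j : Fin N, ∑ k : Fin N, (a j k)^2) - ∑ j : Fin N, ∑ k : Fin N, a j k * a k j := by
  have h2 : ∑ j : Fin N, ∑ k : Fin N, (a j k - a k j)^2
      = 2*(∑ j : Fin N, ∑ k : Fin N, (a j k)^2) - 2*(∑ j : Fin N, ∑ k : Fin N, a j k * a k j) := by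
    have e : ∀ j k : Fin N, (a j k - a k j)^2 = ((a j k)^2 + (a k j)^2) - 2*(a j k * a k j) :=
      fun j k => by ring
    simp only [e, Finset.sum_sub_distrib, Finset.sum_add_distrib, ← Finset.mul_sum]
    rw [Finset.sum_comm (f := fun j k => (a k j)^2)]
    ring
  have hswap : (∑ j : Fin N, ∑ k : Fin N, (if (j:ℕ) < (k:ℕ) then (a j k - a k j)^2 else 0))
      = ∑ j : Fin N, ∑ k : Fin N, (if (k:ℕ) < (j:ℕ) then (a j k - a k j)^2 else 0) := by
    rw [Finset.sum_comm]
    refine Finset.sum_congr rfl fun j _ => Finset.sum_congr rfl fun k _ => ?_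
    exact if_congr Iff.rfl (by ring) rfl
  have h3 : (∑ j : Fin N, ∑ k : Fin N, (if (j:ℕ) < (k:ℕ) then (a j k - a k j)^2 else 0))
      + (∑ j : Fin N, ∑ k : Fin N, (if (j:ℕ) < (k:ℕ) then (a j k - a k j)^2 else 0))
      = ∑ j : Fin N, ∑ k : Fin N, (a j k - a k j)^2 := by
    nth_rewrite 1 [hswap]
    rw [← Finset.sum_add_distrib]
    refine Finset.sum_congr rfl fun j _ => ?_
    rw [← Finset.sum_add_distrib]
    refine Finset.sum_congr rfl fun k _ => ?_
    rcases lt_trichotomy ((j:ℕ)) ((k:ℕ)) with h|h|h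
    · rw [if_neg (show ¬((k:ℕ) < (j:ℕ)) by omega), if_pos h]; ring
    · have : j = k := Fin.ext h
      subst this
      simp
    · rw [if_pos h, if_neg (show ¬((j:ℕ) < (k:ℕ)) by omega)]; ring
  linarith

lemma sum_lin3 {N : ℕ} (a s b : ℝ) (P Q R : Fin N → ℝ) :
    ∑ k : Fin N, (a * P k + s * Q k + b * R k)
      = a * ∑ k : Fin N, P k + s * ∑ k : Fin N, Q k + b * ∑ k : Fin N, R k := by
  simp [Finset.sum_add_distrib, Finset.mul_sum]

lemma sum2_lin {N : ℕ} (a b : ℝ) (P Q : Fin N → Fin N → ℝ) :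
    ∑ j : Fin N, ∑ k : Fin N, (a * P j k + b * Q j k)
      = a * (∑ j : Fin N, ∑ k : Fin N, P j k) + b * (∑ j : Fin N, ∑ k : Fin N, Q j k) := by
  simp [Finset.sum_add_distrib, Finset.mul_sum]

lemma sum2_add {N : ℕ} (P Q : Fin N → Fin N → ℝ) :
    ∑ j : Fin N, ∑ k : Fin N, (P j k + Q j k)
      = (∑ j : Fin N, ∑ k : Fin N, P j k) + (∑ j : Fin N, ∑ k : Fin N, Q j k) := by
  simp [Finset.sum_add_distrib]

lemma sum_sq_expand {N : ℕ} (t : Fin N → ℝ) :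
    (∑ k : Fin N, t k)^2 = ∑ j : Fin N, ∑ k : Fin N, t j * t k := by
  rw [pow_two, Finset.sum_mul_sum]

lemma sum2_sub {N : ℕ} (P Q : Fin N → Fin N → ℝ) :
    ∑ j : Fin N, ∑ k : Fin N, (P j k - Q j k)
      = (∑ j : Fin N, ∑ k : Fin N, P j k) - (∑ j : Fin N, ∑ k : Fin N, Q j k) := by
  simp [Finset.sum_sub_distrib]
/-- the integration-by-parts identity for the quadratic form of `𝕃_ε` on
smooth compactly supported pairs. -/
theorem Lop_quadratic_form_identity (ε : ℝ) (hε : 0 < ε)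
    (b1 b2 : Plane → ℝ) (ψ : Plane → ℂ)
    (hb1 : ContDiff ℝ (⊤ : ℕ∞) b1) (hb2 : ContDiff ℝ (⊤ : ℕ∞) b2)
    (hψ : ContDiff ℝ (⊤ : ℕ∞) ψ)
    (m : ℕ) (hm : 1 ≤ m)
    (c : Tot m → EuclideanSpace ℝ (Fin (m + 2))) (f : Tot m → ℂ)
    (hc : ContDiff ℝ (⊤ : ℕ∞) c) (hf : ContDiff ℝ (⊤ : ℕ∞) f)
    (hcs : HasCompactSupport c) (hfs : HasCompactSupport f) :
    (∫ p : Tot m,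
        (ε ^ 2 * ∑ k : Fin (m + 2), c p k * (Lop ε b1 b2 ψ c f).1 p k
          + ((starRingEnd ℂ) (f p) * (Lop ε b1 b2 ψ c f).2 p).re))
      = (∫ p : Tot m,
          (ε ^ 2 * ∑ j : Fin (m + 2), ∑ k : Fin (m + 2),
              (if (j : ℕ) < (k : ℕ) then
                (pdT (dir m j) (fun q => c q k) p - pdT (dir m k) (fun q => c q j) p) ^ 2
              else 0)
            + ε ^ 2 * (∑ k : Fin (m + 2), pdT (dir m k) (fun q => c q k) p) ^ 2
            + ∑ k : Fin (m + 2), ‖DT b1 b2 k f p‖ ^ 2))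
        - 4 * ∑ k : Fin (m + 2),
            (∫ p : Tot m, c p k * ((starRingEnd ℂ) (DPsi b1 b2 ψ k p) * f p).im)
        + (∫ p : Tot m,
            (‖ψ p.2‖ ^ 2 * ∑ k : Fin (m + 2), (c p k) ^ 2
              + ε⁻¹ ^ 2 * ‖ψ p.2‖ ^ 2 * ‖f p‖ ^ 2
              - 1 / (2 * ε ^ 2) * (1 - ‖ψ p.2‖ ^ 2) * ‖f p‖ ^ 2)) := by
  classical
  have hfD : Differentiable ℝ f := hf.differentiable (by simp)
  have hck : ∀ k : Fin (m+2), ContDiff ℝ (⊤:ℕ∞) (fun q : Tot m => c q k) := by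
    intro k
    exact (EuclideanSpace.proj (𝕜 := ℝ) k).contDiff.comp hc
  have hckD : ∀ k, Differentiable ℝ (fun q : Tot m => c q k) :=
    fun k => (hck k).differentiable (by simp)
  have hckS : ∀ k : Fin (m+2), HasCompactSupport (fun q : Tot m => c q k) := by
    intro k
    exact hcs.comp_left (g := fun x : EuclideanSpace ℝ (Fin (m+2)) => x k) rfl
  have htsub : ∀ k : Fin (m+2), tsupport (fun q : Tot m => c q k) ⊆ tsupport c := by
    intro k
    apply closure_mono
    intro q hq
    simp only [Function.mem_support] at hq ⊢
    intro h0
    exact hq (by rw [h0]; rfl)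
  have hdck : ∀ (j k : Fin (m+2)), ContDiff ℝ (⊤:ℕ∞) (pdT (dir m j) (fun q : Tot m => c q k)) :=
    fun j k => contDiff_pdT (hck k) _
  have hBf : ∀ k : Fin (m+2), ContDiff ℝ (⊤:ℕ∞) (fun p : Tot m => Bf b1 b2 k p) := by
    intro k
    by_cases h1 : (k:ℕ) = m
    · simpa [Bf, h1, Function.comp_def] using hb1.comp contDiff_snd
    · by_cases h2 : (k:ℕ) = m + 1
      · simpa [Bf, h1, h2, Function.comp_def] using hb2.comp contDiff_snd
      · simpa [Bf, h1, h2] using contDiff_const (c := (0:ℝ))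
  have hDT : ∀ k : Fin (m+2), ContDiff ℝ (⊤:ℕ∞) (fun q : Tot m => DT b1 b2 k f q) := by
    intro k
    show ContDiff ℝ (⊤:ℕ∞)
      (fun q : Tot m => pdT (dir m k) f q + Complex.I * ((Bf b1 b2 k q : ℝ) : ℂ) * f q)
    exact (contDiff_pdT hf _).add
      ((contDiff_const.mul ((Complex.ofRealCLM.contDiff).comp (hBf k))).mul hf)
  have hDTD : ∀ k, Differentiable ℝ (fun q : Tot m => DT b1 b2 k f q) :=
    fun k => (hDT k).differentiable (by simp)
  have hDT0 : ∀ (k : Fin (m+2)) (q : Tot m), q ∉ tsupport f → DT b1 b2 k f q = 0 := by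
    intro k q hq
    show pdT (dir m k) f q + Complex.I * ((Bf b1 b2 k q : ℝ) : ℂ) * f q = 0
    rw [pdT_eq_zero_of_nmem hq, image_eq_zero_of_notMem_tsupport hq]
    ring
  have hconjf : ContDiff ℝ (⊤:ℕ∞) (fun q : Tot m => (starRingEnd ℂ) (f q)) :=
    ((Complex.conjCLE : ℂ ≃L[ℝ] ℂ).toContinuousLinearMap.contDiff).comp hf
  have hW : ∀ k : Fin (m+2),
      ContDiff ℝ (⊤:ℕ∞) (fun q : Tot m => ((starRingEnd ℂ) (f q) * DT b1 b2 k f q).re) :=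
    fun k => Complex.reCLM.contDiff.comp (hconjf.mul (hDT k))
  have hWS : ∀ k : Fin (m+2),
      HasCompactSupport (fun q : Tot m => ((starRingEnd ℂ) (f q) * DT b1 b2 k f q).re) := by
    intro k
    apply HasCompactSupport.intro hfs
    intro q hq
    simp [image_eq_zero_of_notMem_tsupport hq]
  have hU1 : ∀ (k j : Fin (m+2)),
      ContDiff ℝ (⊤:ℕ∞) (fun q : Tot m => c q k * pdT (dir m j) (fun r => c r k) q) :=
    fun k j => (hck k).mul (hdck j k)
  have hU2 : ∀ (j k : Fin (m+2)),
      ContDiff ℝ (⊤:ℕ∞) (fun q : Tot m => c q k * pdT (dir m k) (fun r => c r j) q) :=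
    fun j k => (hck k).mul (hdck k j)
  have hU3 : ∀ (j k : Fin (m+2)),
      ContDiff ℝ (⊤:ℕ∞) (fun q : Tot m => c q k * pdT (dir m j) (fun r => c r j) q) :=
    fun j k => (hck k).mul (hdck j j)
  have hUS : ∀ (k : Fin (m+2)) (w : Tot m → ℝ),
      HasCompactSupport (fun q : Tot m => c q k * w q) := by
    intro k w
    apply HasCompactSupport.intro (hckS k)
    intro q hq
    have h0 : c q k = 0 := image_eq_zero_of_notMem_tsupport (f := fun q : Tot m => c q k) hq
    simp [h0]
  have hIcont : ∀ {u : Tot m → ℝ}, Continuous u → HasCompactSupport u →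
      Integrable u (volume : Measure (Tot m)) :=
    fun hu hus => hu.integrable_of_hasCompactSupport hus
  have hdiv1 : ∀ (k j : Fin (m+2)),
      (∫ p : Tot m, pdT (dir m j) (fun q => c q k * pdT (dir m j) (fun r => c r k) q) p) = 0 :=
    fun k j => integral_pdT_eq_zero (hU1 k j) (hUS k _) _
  have hdiv2 : ∀ (j k : Fin (m+2)),
      (∫ p : Tot m, pdT (dir m j) (fun q => c q k * pdT (dir m k) (fun r => c r j) q) p) = 0 :=
    fun j k => integral_pdT_eq_zero (hU2 j k) (hUS k _) _
  have hdiv3 : ∀ (j k : Fin (m+2)),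
      (∫ p : Tot m, pdT (dir m k) (fun q => c q k * pdT (dir m j) (fun r => c r j) q) p) = 0 :=
    fun j k => integral_pdT_eq_zero (hU3 j k) (hUS k _) _
  have hdivW : ∀ k : Fin (m+2),
      (∫ p : Tot m, pdT (dir m k) (fun q => ((starRingEnd ℂ) (f q) * DT b1 b2 k f q).re) p) = 0 :=
    fun k => integral_pdT_eq_zero (hW k) (hWS k) _
  have hIpdT : ∀ {u : Tot m → ℝ}, ContDiff ℝ (⊤:ℕ∞) u → HasCompactSupport u → ∀ v : Tot m,
      Integrable (pdT v u) (volume : Measure (Tot m)) :=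
    fun hu hus v => hIcont (contDiff_pdT hu v).continuous (hcs_pdT hus v)
  -- continuity of DPsi
  have hD1C : Continuous (D1 b1 ψ) := by
    show Continuous fun y => (fun z => fderiv ℝ ψ z (EuclideanSpace.single 0 1)) y
        + Complex.I * ((b1 y : ℝ) : ℂ) * ψ y
    exact ((contDiff_fderiv_apply hψ _).continuous).add
      ((continuous_const.mul (Complex.continuous_ofReal.comp hb1.continuous)).mul hψ.continuous)
  have hD2C : Continuous (D2 b2 ψ) := by
    show Continuous fun y => (fun z => fderiv ℝ ψ z (EuclideanSpace.single 1 1)) y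
        + Complex.I * ((b2 y : ℝ) : ℂ) * ψ y
    exact ((contDiff_fderiv_apply hψ _).continuous).add
      ((continuous_const.mul (Complex.continuous_ofReal.comp hb2.continuous)).mul hψ.continuous)
  have hDPsiC : ∀ k : Fin (m+2), Continuous (fun p : Tot m => DPsi b1 b2 ψ k p) := by
    intro k
    by_cases h1 : (k:ℕ) = m
    · simpa [DPsi, h1, Function.comp_def] using hD1C.comp continuous_snd
    · by_cases h2 : (k:ℕ) = m + 1
      · simpa [DPsi, h1, h2, Function.comp_def] using hD2C.comp continuous_snd
      · simpa [DPsi, h1, h2] using continuous_const (y := (0:ℂ))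
  have hpsiC : Continuous (fun p : Tot m => ‖ψ p.2‖^2) :=
    ((hψ.continuous.comp continuous_snd).norm.pow 2)
  -- integrability of the three right-hand side integrands
  have hAI : Integrable (fun p : Tot m =>
      ε ^ 2 * ∑ j : Fin (m + 2), ∑ k : Fin (m + 2),
          (if (j : ℕ) < (k : ℕ) then
            (pdT (dir m j) (fun q => c q k) p - pdT (dir m k) (fun q => c q j) p) ^ 2
          else 0)
        + ε ^ 2 * (∑ k : Fin (m + 2), pdT (dir m k) (fun q => c q k) p) ^ 2
        + ∑ k : Fin (m + 2), ‖DT b1 b2 k f p‖ ^ 2) (volume : Measure (Tot m)) := by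
    apply hIcont
    · refine ((continuous_const.mul ?_).add (continuous_const.mul ?_)).add ?_
      · refine continuous_finset_sum _ fun j _ => continuous_finset_sum _ fun k _ => ?_
        by_cases h : (j:ℕ) < (k:ℕ)
        · simp only [h, ↓reduceIte]; exact (((hdck j k).continuous.sub (hdck k j).continuous).pow 2)
        · simpa [h] using continuous_const (y := (0:ℝ))
      · exact ((continuous_finset_sum _ fun k _ => (hdck k k).continuous).pow 2)
      · exact continuous_finset_sum _ fun k _ => ((hDT k).continuous.norm.pow 2)
    · apply HasCompactSupport.intro (hcs.union hfs)
      intro q hq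
      simp only [Set.mem_union] at hq
      push_neg at hq
      have e1 : ∀ a b : Fin (m+2), pdT (dir m a) (fun r : Tot m => c r b) q = 0 := by
        intro a b
        exact pdT_eq_zero_of_nmem (fun hmem => hq.1 (htsub b hmem)) _
      have e2 : ∀ k : Fin (m+2), DT b1 b2 k f q = 0 := fun k => hDT0 k q hq.2
      simp [e1, e2]
  have hBI : ∀ k : Fin (m+2), Integrable (fun p : Tot m =>
      c p k * ((starRingEnd ℂ) (DPsi b1 b2 ψ k p) * f p).im) (volume : Measure (Tot m)) := by
    intro k
    apply hIcont
    · exact (hck k).continuous.mul (Complex.continuous_im.comp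
        ((continuous_star.comp (hDPsiC k)).mul hf.continuous))
    · apply HasCompactSupport.intro (hckS k)
      intro q hq
      have h0 : c q k = 0 := image_eq_zero_of_notMem_tsupport (f := fun q : Tot m => c q k) hq
      simp [h0]
  have hCI : Integrable (fun p : Tot m =>
      ‖ψ p.2‖ ^ 2 * ∑ k : Fin (m + 2), (c p k) ^ 2
        + ε⁻¹ ^ 2 * ‖ψ p.2‖ ^ 2 * ‖f p‖ ^ 2
        - 1 / (2 * ε ^ 2) * (1 - ‖ψ p.2‖ ^ 2) * ‖f p‖ ^ 2) (volume : Measure (Tot m)) := by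
    apply hIcont
    · refine ((hpsiC.mul (continuous_finset_sum _ fun k _ => ((hck k).continuous.pow 2))).add
        ((continuous_const.mul hpsiC).mul (hf.continuous.norm.pow 2))).sub
        ((continuous_const.mul (continuous_const.sub hpsiC)).mul (hf.continuous.norm.pow 2))
    · apply HasCompactSupport.intro (hcs.union hfs)
      intro q hq
      simp only [Set.mem_union] at hq
      push_neg at hq
      have e0 : ∀ k : Fin (m+2), c q k = 0 :=
        fun k => image_eq_zero_of_notMem_tsupport (f := fun q : Tot m => c q k) (fun hmem => hq.1 (htsub k hmem))
      have e1 : f q = 0 := image_eq_zero_of_notMem_tsupport hq.2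
      simp [e0, e1]
  -- the pointwise identity
  have key : ∀ p : Tot m,
      ε ^ 2 * ∑ k : Fin (m + 2), c p k * (Lop ε b1 b2 ψ c f).1 p k
        + ((starRingEnd ℂ) (f p) * (Lop ε b1 b2 ψ c f).2 p).re
      = (ε ^ 2 * ∑ j : Fin (m + 2), ∑ k : Fin (m + 2),
            (if (j : ℕ) < (k : ℕ) then
              (pdT (dir m j) (fun q => c q k) p - pdT (dir m k) (fun q => c q j) p) ^ 2
            else 0)
          + ε ^ 2 * (∑ k : Fin (m + 2), pdT (dir m k) (fun q => c q k) p) ^ 2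
          + ∑ k : Fin (m + 2), ‖DT b1 b2 k f p‖ ^ 2
        - 4 * ∑ k : Fin (m + 2), c p k * ((starRingEnd ℂ) (DPsi b1 b2 ψ k p) * f p).im
        + (‖ψ p.2‖ ^ 2 * ∑ k : Fin (m + 2), (c p k) ^ 2
            + ε⁻¹ ^ 2 * ‖ψ p.2‖ ^ 2 * ‖f p‖ ^ 2
            - 1 / (2 * ε ^ 2) * (1 - ‖ψ p.2‖ ^ 2) * ‖f p‖ ^ 2))
        + ((∑ j : Fin (m + 2), ∑ k : Fin (m + 2),
              (-(ε^2) * pdT (dir m j) (fun q => c q k * pdT (dir m j) (fun r => c r k) q) p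
                + ε^2 * (pdT (dir m j) (fun q => c q k * pdT (dir m k) (fun r => c r j) q) p
                  - pdT (dir m k) (fun q => c q k * pdT (dir m j) (fun r => c r j) q) p)))
          - ∑ k : Fin (m + 2),
              pdT (dir m k) (fun q => ((starRingEnd ℂ) (f q) * DT b1 b2 k f q).re) p) := by
    intro p
    have hL1 : ∀ k : Fin (m+2), (Lop ε b1 b2 ψ c f).1 p k
        = -lapT (fun q => c q k) p + ε⁻¹ ^ 2 * ‖ψ p.2‖ ^ 2 * c p k
          - 2 * ε⁻¹ ^ 2 * ((starRingEnd ℂ) (DPsi b1 b2 ψ k p) * f p).im := fun k => rfl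
    have hL2 : (Lop ε b1 b2 ψ c f).2 p
        = -(∑ k : Fin (m+2), DT b1 b2 k (fun q => DT b1 b2 k f q) p)
          + ((ε⁻¹ ^ 2 * ‖ψ p.2‖ ^ 2 : ℝ) : ℂ) * f p
          - ((1 / (2 * ε ^ 2) * (1 - ‖ψ p.2‖ ^ 2) : ℝ) : ℂ) * f p
          - 2 * Complex.I * ∑ k : Fin (m+2), ((c p k : ℝ) : ℂ) * DPsi b1 b2 ψ k p := rfl
    have e1 : ε ^ 2 * ∑ k : Fin (m + 2), c p k * (Lop ε b1 b2 ψ c f).1 p k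
        = (-(ε^2)) * (∑ k : Fin (m+2), c p k *
              ∑ j : Fin (m+2), pdT (dir m j) (pdT (dir m j) (fun q => c q k)) p)
          + ‖ψ p.2‖^2 * (∑ k : Fin (m+2), (c p k)^2)
          + (-2) * (∑ k : Fin (m+2),
              c p k * ((starRingEnd ℂ) (DPsi b1 b2 ψ k p) * f p).im) := by
      rw [Finset.mul_sum, ← sum_lin3]
      refine Finset.sum_congr rfl fun k _ => ?_
      rw [hL1 k, show lapT (fun q => c q k) p
        = ∑ j : Fin (m+2), pdT (dir m j) (pdT (dir m j) (fun q => c q k)) p from rfl]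
      field_simp
      ring
    have e2 : ((starRingEnd ℂ) (f p) * (Lop ε b1 b2 ψ c f).2 p).re
        = ((∑ k : Fin (m+2), ‖DT b1 b2 k f p‖^2)
            - ∑ k : Fin (m+2), (((starRingEnd ℂ) (pdT (dir m k) f p) * DT b1 b2 k f p).re
                + ((starRingEnd ℂ) (f p) * pdT (dir m k) (fun q => DT b1 b2 k f q) p).re))
          + (-2) * (∑ k : Fin (m+2),
              c p k * ((starRingEnd ℂ) (DPsi b1 b2 ψ k p) * f p).im)
          + (ε⁻¹ ^ 2 * ‖ψ p.2‖ ^ 2 * ‖f p‖ ^ 2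
              - 1 / (2 * ε ^ 2) * (1 - ‖ψ p.2‖ ^ 2) * ‖f p‖ ^ 2) := by
      rw [hL2]
      have hsplit : (starRingEnd ℂ) (f p) *
          (-(∑ k : Fin (m+2), DT b1 b2 k (fun q => DT b1 b2 k f q) p)
            + ((ε⁻¹ ^ 2 * ‖ψ p.2‖ ^ 2 : ℝ) : ℂ) * f p
            - ((1 / (2 * ε ^ 2) * (1 - ‖ψ p.2‖ ^ 2) : ℝ) : ℂ) * f p
            - 2 * Complex.I * ∑ k : Fin (m+2), ((c p k : ℝ) : ℂ) * DPsi b1 b2 ψ k p)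
          = -((starRingEnd ℂ) (f p) * ∑ k : Fin (m+2), DT b1 b2 k (fun q => DT b1 b2 k f q) p)
            + (starRingEnd ℂ) (f p) * (((ε⁻¹ ^ 2 * ‖ψ p.2‖ ^ 2 : ℝ) : ℂ) * f p)
            - (starRingEnd ℂ) (f p) * (((1 / (2 * ε ^ 2) * (1 - ‖ψ p.2‖ ^ 2) : ℝ) : ℂ) * f p)
            - (starRingEnd ℂ) (f p) *
                (2 * Complex.I * ∑ k : Fin (m+2), ((c p k : ℝ) : ℂ) * DPsi b1 b2 ψ k p) := by
        ring
      rw [hsplit, Complex.sub_re, Complex.sub_re, Complex.add_re, Complex.neg_re]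
      have hS : ((starRingEnd ℂ) (f p)
            * ∑ k : Fin (m+2), DT b1 b2 k (fun q => DT b1 b2 k f q) p).re
          = ∑ k : Fin (m+2), (((starRingEnd ℂ) (pdT (dir m k) f p) * DT b1 b2 k f p).re
              + ((starRingEnd ℂ) (f p) * pdT (dir m k) (fun q => DT b1 b2 k f q) p).re
              - ‖DT b1 b2 k f p‖^2) := by
        rw [Finset.mul_sum, Complex.re_sum]
        refine Finset.sum_congr rfl fun k _ => ?_
        have eDD : DT b1 b2 k (fun q => DT b1 b2 k f q) p
            = pdT (dir m k) (fun q => DT b1 b2 k f q) p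
              + Complex.I * ((Bf b1 b2 k p : ℝ) : ℂ) * DT b1 b2 k f p := rfl
        rw [eDD, mul_add, Complex.add_re]
        have hk1 := qf_key1 (f p) (pdT (dir m k) f p) (DT b1 b2 k f p) (Bf b1 b2 k p) rfl
        linarith [hk1]
      have hX : ((starRingEnd ℂ) (f p) *
            (2 * Complex.I * ∑ k : Fin (m+2), ((c p k : ℝ) : ℂ) * DPsi b1 b2 ψ k p)).re
          = 2 * ∑ k : Fin (m+2), c p k * ((starRingEnd ℂ) (DPsi b1 b2 ψ k p) * f p).im := by
        rw [Finset.mul_sum, Finset.mul_sum, Complex.re_sum, Finset.mul_sum]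
        exact Finset.sum_congr rfl fun k _ => qf_key2 (f p) (DPsi b1 b2 ψ k p) (c p k)
      rw [hS, hX, qf_key3 (f p) (ε⁻¹ ^ 2 * ‖ψ p.2‖ ^ 2),
        qf_key3 (f p) (1 / (2 * ε ^ 2) * (1 - ‖ψ p.2‖ ^ 2)), Finset.sum_sub_distrib]
      ring
    have eA : ε ^ 2 * ∑ j : Fin (m + 2), ∑ k : Fin (m + 2),
          (if (j : ℕ) < (k : ℕ) then
            (pdT (dir m j) (fun q => c q k) p - pdT (dir m k) (fun q => c q j) p) ^ 2
          else 0)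
          + ε ^ 2 * (∑ k : Fin (m + 2), pdT (dir m k) (fun q => c q k) p) ^ 2
          + ∑ k : Fin (m + 2), ‖DT b1 b2 k f p‖ ^ 2
        = ε^2 * ((∑ j : Fin (m+2), ∑ k : Fin (m+2), (pdT (dir m j) (fun q => c q k) p)^2)
            - ∑ j : Fin (m+2), ∑ k : Fin (m+2),
                pdT (dir m j) (fun q => c q k) p * pdT (dir m k) (fun q => c q j) p)
          + ε^2 * (∑ j : Fin (m+2), ∑ k : Fin (m+2),
              pdT (dir m j) (fun q => c q j) p * pdT (dir m k) (fun q => c q k) p)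
          + ∑ k : Fin (m+2), ‖DT b1 b2 k f p‖^2 := by
      rw [sum_ite_antisym (a := fun j k => pdT (dir m j) (fun q => c q k) p),
        sum_sq_expand (t := fun k => pdT (dir m k) (fun q => c q k) p)]
    have eW : ∑ k : Fin (m+2),
          pdT (dir m k) (fun q => ((starRingEnd ℂ) (f q) * DT b1 b2 k f q).re) p
        = ∑ k : Fin (m+2), (((starRingEnd ℂ) (pdT (dir m k) f p) * DT b1 b2 k f p).re
            + ((starRingEnd ℂ) (f p) * pdT (dir m k) (fun q => DT b1 b2 k f q) p).re) :=
      Finset.sum_congr rfl fun k _ => pdT_re_conj_mul hfD (hDTD k) _ p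
    have eD : ∑ j : Fin (m + 2), ∑ k : Fin (m + 2),
          (-(ε^2) * pdT (dir m j) (fun q => c q k * pdT (dir m j) (fun r => c r k) q) p
            + ε^2 * (pdT (dir m j) (fun q => c q k * pdT (dir m k) (fun r => c r j) q) p
              - pdT (dir m k) (fun q => c q k * pdT (dir m j) (fun r => c r j) q) p))
        = -(ε^2) * ((∑ j : Fin (m+2), ∑ k : Fin (m+2), (pdT (dir m j) (fun q => c q k) p)^2)
              + ∑ k : Fin (m+2), c p k *
                  ∑ j : Fin (m+2), pdT (dir m j) (pdT (dir m j) (fun q => c q k)) p)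
          + ε^2 * ((∑ j : Fin (m+2), ∑ k : Fin (m+2),
                pdT (dir m j) (fun q => c q k) p * pdT (dir m k) (fun q => c q j) p)
              - ∑ j : Fin (m+2), ∑ k : Fin (m+2),
                pdT (dir m j) (fun q => c q j) p * pdT (dir m k) (fun q => c q k) p) := by
      have hstep : ∀ j k : Fin (m+2),
          -(ε^2) * pdT (dir m j) (fun q => c q k * pdT (dir m j) (fun r => c r k) q) p
            + ε^2 * (pdT (dir m j) (fun q => c q k * pdT (dir m k) (fun r => c r j) q) p
              - pdT (dir m k) (fun q => c q k * pdT (dir m j) (fun r => c r j) q) p)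
          = -(ε^2) * ((pdT (dir m j) (fun q => c q k) p)^2
              + c p k * pdT (dir m j) (pdT (dir m j) (fun q => c q k)) p)
            + ε^2 * (pdT (dir m j) (fun q => c q k) p * pdT (dir m k) (fun q => c q j) p
              - pdT (dir m k) (fun q => c q k) p * pdT (dir m j) (fun q => c q j) p) := by
        intro j k
        rw [pdT_mul (hckD k) ((hdck j k).differentiable (by simp)) (dir m j) p,
          pdT_mul (hckD k) ((hdck k j).differentiable (by simp)) (dir m j) p,
          pdT_mul (hckD k) ((hdck j j).differentiable (by simp)) (dir m k) p,
          pdT_pdT_comm (hck j) (dir m k) (dir m j) p]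
        ring
      rw [Finset.sum_congr rfl fun j _ => Finset.sum_congr rfl fun k _ => hstep j k]
      rw [sum2_lin (-(ε^2)) (ε^2)
        (fun j k => (pdT (dir m j) (fun q => c q k) p)^2
          + c p k * pdT (dir m j) (pdT (dir m j) (fun q => c q k)) p)
        (fun j k => pdT (dir m j) (fun q => c q k) p * pdT (dir m k) (fun q => c q j) p
          - pdT (dir m k) (fun q => c q k) p * pdT (dir m j) (fun q => c q j) p)]
      rw [sum2_add, sum2_sub]
      rw [show ∑ j : Fin (m+2), ∑ k : Fin (m+2),
            c p k * pdT (dir m j) (pdT (dir m j) (fun q => c q k)) p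
          = ∑ k : Fin (m+2), c p k *
              ∑ j : Fin (m+2), pdT (dir m j) (pdT (dir m j) (fun q => c q k)) p from by
        rw [Finset.sum_comm]
        exact Finset.sum_congr rfl fun k _ => (Finset.mul_sum _ _ _).symm]
      rw [show ∑ j : Fin (m+2), ∑ k : Fin (m+2),
            pdT (dir m k) (fun q => c q k) p * pdT (dir m j) (fun q => c q j) p
          = ∑ j : Fin (m+2), ∑ k : Fin (m+2),
            pdT (dir m j) (fun q => c q j) p * pdT (dir m k) (fun q => c q k) p from
        Finset.sum_comm]
    rw [e1, e2, eA, eW, eD]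
    ring
  -- integrability of the divergence integrand
  have hB4I : Integrable (fun p : Tot m =>
      4 * ∑ k : Fin (m+2), c p k * ((starRingEnd ℂ) (DPsi b1 b2 ψ k p) * f p).im)
      (volume : Measure (Tot m)) :=
    (integrable_finset_sum _ fun k _ => hBI k).const_mul 4
  have hRHSI : Integrable (fun p : Tot m =>
      (ε ^ 2 * ∑ j : Fin (m + 2), ∑ k : Fin (m + 2),
            (if (j : ℕ) < (k : ℕ) then
              (pdT (dir m j) (fun q => c q k) p - pdT (dir m k) (fun q => c q j) p) ^ 2
            else 0)
          + ε ^ 2 * (∑ k : Fin (m + 2), pdT (dir m k) (fun q => c q k) p) ^ 2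
          + ∑ k : Fin (m + 2), ‖DT b1 b2 k f p‖ ^ 2
        - 4 * ∑ k : Fin (m + 2), c p k * ((starRingEnd ℂ) (DPsi b1 b2 ψ k p) * f p).im
        + (‖ψ p.2‖ ^ 2 * ∑ k : Fin (m + 2), (c p k) ^ 2
            + ε⁻¹ ^ 2 * ‖ψ p.2‖ ^ 2 * ‖f p‖ ^ 2
            - 1 / (2 * ε ^ 2) * (1 - ‖ψ p.2‖ ^ 2) * ‖f p‖ ^ 2)))
      (volume : Measure (Tot m)) := (hAI.sub hB4I).add hCI
  have hDsumI : ∀ (j k : Fin (m+2)), Integrable (fun p : Tot m =>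
      -(ε^2) * pdT (dir m j) (fun q => c q k * pdT (dir m j) (fun r => c r k) q) p
        + ε^2 * (pdT (dir m j) (fun q => c q k * pdT (dir m k) (fun r => c r j) q) p
          - pdT (dir m k) (fun q => c q k * pdT (dir m j) (fun r => c r j) q) p))
      (volume : Measure (Tot m)) := by
    intro j k
    exact ((hIpdT (hU1 k j) (hUS k _) _).const_mul _).add
      (((hIpdT (hU2 j k) (hUS k _) _).sub (hIpdT (hU3 j k) (hUS k _) _)).const_mul _)
  have hDI : Integrable (fun p : Tot m =>
      (∑ j : Fin (m + 2), ∑ k : Fin (m + 2),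
          (-(ε^2) * pdT (dir m j) (fun q => c q k * pdT (dir m j) (fun r => c r k) q) p
            + ε^2 * (pdT (dir m j) (fun q => c q k * pdT (dir m k) (fun r => c r j) q) p
              - pdT (dir m k) (fun q => c q k * pdT (dir m j) (fun r => c r j) q) p)))
        - ∑ k : Fin (m + 2),
            pdT (dir m k) (fun q => ((starRingEnd ℂ) (f q) * DT b1 b2 k f q).re) p)
      (volume : Measure (Tot m)) :=
    (integrable_finset_sum _ fun j _ => integrable_finset_sum _ fun k _ => hDsumI j k).sub
      (integrable_finset_sum _ fun k _ => hIpdT (hW k) (hWS k) _)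
  have hDzero : (∫ p : Tot m,
      ((∑ j : Fin (m + 2), ∑ k : Fin (m + 2),
          (-(ε^2) * pdT (dir m j) (fun q => c q k * pdT (dir m j) (fun r => c r k) q) p
            + ε^2 * (pdT (dir m j) (fun q => c q k * pdT (dir m k) (fun r => c r j) q) p
              - pdT (dir m k) (fun q => c q k * pdT (dir m j) (fun r => c r j) q) p)))
        - ∑ k : Fin (m + 2),
            pdT (dir m k) (fun q => ((starRingEnd ℂ) (f q) * DT b1 b2 k f q).re) p)) = 0 := by
    rw [integral_sub
      (integrable_finset_sum _ fun j _ => integrable_finset_sum _ fun k _ => hDsumI j k)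
      (integrable_finset_sum _ fun k _ => hIpdT (hW k) (hWS k) _)]
    have h1 : (∫ p : Tot m, ∑ j : Fin (m + 2), ∑ k : Fin (m + 2),
        (-(ε^2) * pdT (dir m j) (fun q => c q k * pdT (dir m j) (fun r => c r k) q) p
          + ε^2 * (pdT (dir m j) (fun q => c q k * pdT (dir m k) (fun r => c r j) q) p
            - pdT (dir m k) (fun q => c q k * pdT (dir m j) (fun r => c r j) q) p))) = 0 := by
      rw [integral_finset_sum _ fun j _ => integrable_finset_sum _ fun k _ => hDsumI j k]
      refine Finset.sum_eq_zero fun j _ => ?_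
      rw [integral_finset_sum _ fun k _ => hDsumI j k]
      refine Finset.sum_eq_zero fun k _ => ?_
      have i1 : Integrable (fun p : Tot m =>
          -(ε^2) * pdT (dir m j) (fun q => c q k * pdT (dir m j) (fun r => c r k) q) p)
          (volume : Measure (Tot m)) := (hIpdT (hU1 k j) (hUS k _) _).const_mul _
      have i2 : Integrable (fun p : Tot m =>
          pdT (dir m j) (fun q => c q k * pdT (dir m k) (fun r => c r j) q) p
            - pdT (dir m k) (fun q => c q k * pdT (dir m j) (fun r => c r j) q) p)
          (volume : Measure (Tot m)) := by
        exact (hIpdT (hU2 j k) (hUS k _) _).sub (hIpdT (hU3 j k) (hUS k _) _)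
      have i2' : Integrable (fun p : Tot m =>
          ε^2 * (pdT (dir m j) (fun q => c q k * pdT (dir m k) (fun r => c r j) q) p
            - pdT (dir m k) (fun q => c q k * pdT (dir m j) (fun r => c r j) q) p))
          (volume : Measure (Tot m)) := i2.const_mul _
      rw [integral_add i1 i2', integral_const_mul, integral_const_mul,
        integral_sub (hIpdT (hU2 j k) (hUS k _) _) (hIpdT (hU3 j k) (hUS k _) _),
        hdiv1 k j, hdiv2 j k, hdiv3 j k]
      ring
    have h2 : (∫ p : Tot m, ∑ k : Fin (m + 2),
        pdT (dir m k) (fun q => ((starRingEnd ℂ) (f q) * DT b1 b2 k f q).re) p) = 0 := by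
      rw [integral_finset_sum _ fun k _ => hIpdT (hW k) (hWS k) _]
      exact Finset.sum_eq_zero fun k _ => hdivW k
    rw [h1, h2]
    ring
  have step1 : (∫ p : Tot m,
      (ε ^ 2 * ∑ k : Fin (m + 2), c p k * (Lop ε b1 b2 ψ c f).1 p k
        + ((starRingEnd ℂ) (f p) * (Lop ε b1 b2 ψ c f).2 p).re))
      = (∫ p : Tot m,
        ((ε ^ 2 * ∑ j : Fin (m + 2), ∑ k : Fin (m + 2),
              (if (j : ℕ) < (k : ℕ) then
                (pdT (dir m j) (fun q => c q k) p - pdT (dir m k) (fun q => c q j) p) ^ 2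
              else 0)
            + ε ^ 2 * (∑ k : Fin (m + 2), pdT (dir m k) (fun q => c q k) p) ^ 2
            + ∑ k : Fin (m + 2), ‖DT b1 b2 k f p‖ ^ 2
          - 4 * ∑ k : Fin (m + 2), c p k * ((starRingEnd ℂ) (DPsi b1 b2 ψ k p) * f p).im
          + (‖ψ p.2‖ ^ 2 * ∑ k : Fin (m + 2), (c p k) ^ 2
              + ε⁻¹ ^ 2 * ‖ψ p.2‖ ^ 2 * ‖f p‖ ^ 2
              - 1 / (2 * ε ^ 2) * (1 - ‖ψ p.2‖ ^ 2) * ‖f p‖ ^ 2))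
          + ((∑ j : Fin (m + 2), ∑ k : Fin (m + 2),
                (-(ε^2) * pdT (dir m j) (fun q => c q k * pdT (dir m j) (fun r => c r k) q) p
                  + ε^2 * (pdT (dir m j) (fun q => c q k * pdT (dir m k) (fun r => c r j) q) p
                    - pdT (dir m k) (fun q => c q k * pdT (dir m j) (fun r => c r j) q) p)))
            - ∑ k : Fin (m + 2),
                pdT (dir m k) (fun q => ((starRingEnd ℂ) (f q) * DT b1 b2 k f q).re) p))) := by
    congr 1
    funext p
    exact key p
  have hAB : Integrable (fun p : Tot m =>
      ε ^ 2 * ∑ j : Fin (m + 2), ∑ k : Fin (m + 2),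
            (if (j : ℕ) < (k : ℕ) then
              (pdT (dir m j) (fun q => c q k) p - pdT (dir m k) (fun q => c q j) p) ^ 2
            else 0)
          + ε ^ 2 * (∑ k : Fin (m + 2), pdT (dir m k) (fun q => c q k) p) ^ 2
          + ∑ k : Fin (m + 2), ‖DT b1 b2 k f p‖ ^ 2
        - 4 * ∑ k : Fin (m + 2), c p k * ((starRingEnd ℂ) (DPsi b1 b2 ψ k p) * f p).im)
      (volume : Measure (Tot m)) := by exact hAI.sub hB4I
  rw [step1, integral_add hRHSI hDI, hDzero, add_zero,
    integral_add hAB hCI, integral_sub hAI hB4I, integral_const_mul,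
    integral_finset_sum _ fun k _ => hBI k]
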